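/- The function P is convex on ℝ, hence 𝒫 is a convex function on ℝ²; 𝒫 is invariant under the dihedral group D₄ generated by the involutions G(x,y) = (y,x) and G′(x,y) = (x,−y), i.e. 𝒫 ∘ G = 𝒫 and 𝒫 ∘ G′ = 𝒫; and for every c > 0 the sublevel set {z ∈ ℝ² : 𝒫(z) ≤ c} is a compact convex subset of ℝ² with nonempty interior whose topological boundary equals the level set {z ∈ ℝ² : 𝒫(z) = c}. -/

import Mathlib

open scoped Classical

noncomputable section

open Set

/-- The scaled round-off map `F_λ` on the plane: `F_λ(z) = λ·F(z/λ)`,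
so `F_λ(z) = (λ⌊z₁⌋ − z₂, z₁)`. -/
def Fl (lam : ℝ) (z : ℝ × ℝ) : ℝ × ℝ := (lam * (⌊z.1⌋ : ℝ) - z.2, z.1)

/-- The inverse of `F_λ`. -/
def Flinv (lam : ℝ) (z : ℝ × ℝ) : ℝ × ℝ := (z.2, lam * (⌊z.2⌋ : ℝ) - z.1)

/-- Integer iterate `F_λ^k`, `k ∈ ℤ`. -/
def FlIter (lam : ℝ) (k : ℤ) (z : ℝ × ℝ) : ℝ × ℝ :=
  if 0 ≤ k then (Fl lam)^[k.toNat] z else (Flinv lam)^[(-k).toNat] z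

/-- Membership in the scaled lattice `(λℤ)²`. -/
def IsLatticePt (lam : ℝ) (z : ℝ × ℝ) : Prop := ∃ a b : ℤ, z = (lam * a, lam * b)

/-- The discrete vector field `𝐯(z) = F_λ⁴(z) − z`. -/
def vfield (lam : ℝ) (z : ℝ × ℝ) : ℝ × ℝ := (Fl lam)^[4] z - z

/-- The auxiliary (integrable) vector field `𝐰`. -/
def wfield (lam : ℝ) (z : ℝ × ℝ) : ℝ × ℝ :=
  (lam * (2 * (⌊z.2⌋ : ℝ) + 1), -(lam * (2 * (⌊z.1⌋ : ℝ) + 1)))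

/-- The constant value `𝐰_{m,n}` of `𝐰` on the box `B_{m,n}`. -/
def wmn (lam : ℝ) (m n : ℤ) : ℝ × ℝ :=
  (lam * (2 * (n : ℝ) + 1), -(lam * (2 * (m : ℝ) + 1)))

/-- The piecewise-affine function `P(x) = ⌊x⌋² + (2⌊x⌋+1)(x − ⌊x⌋)`. -/
def Pfun (x : ℝ) : ℝ := (⌊x⌋ : ℝ) ^ 2 + (2 * (⌊x⌋ : ℝ) + 1) * (x - (⌊x⌋ : ℝ))

/-- The Hamiltonian `𝒫(x,y) = P(x) + P(y)`. -/
def Ham (z : ℝ × ℝ) : ℝ := Pfun z.1 + Pfun z.2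

/-- The round Hamiltonian `𝒬(x,y) = x² + y²`. -/
def Qfun (z : ℝ × ℝ) : ℝ := z.1 ^ 2 + z.2 ^ 2

/-- The level set `Π(z)` of `𝒫` through `z`. -/
def levelSet (z : ℝ × ℝ) : Set (ℝ × ℝ) := {w | Ham w = Ham z}

/-- The grid `Δ` of horizontal and vertical integer lines. -/
def DeltaSet : Set (ℝ × ℝ) := {z | (∃ m : ℤ, z.1 = (m : ℝ)) ∨ (∃ n : ℤ, z.2 = (n : ℝ))}

/-- The box `B_{m,n}`. -/
def Bbox (m n : ℤ) : Set (ℝ × ℝ) := {z | ⌊z.1⌋ = m ∧ ⌊z.2⌋ = n}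

/-- The lattice `ℤ² ⊂ ℝ²`. -/
def intLattice : Set (ℝ × ℝ) := {z | ∃ a b : ℤ, z = ((a : ℝ), (b : ℝ))}

/-- `r(c)`: the number of representations of `c` as a sum of two integer squares. -/
def rfun (c : ℝ) : ℕ := Set.ncard {p : ℤ × ℤ | ((p.1 : ℝ)) ^ 2 + ((p.2 : ℝ)) ^ 2 = c}

/-- Euclidean distance from `z` to the symmetry line `y = x`. -/
def dG (z : ℝ × ℝ) : ℝ := |z.1 - z.2| / Real.sqrt 2

/-- The integer round-off `R`. -/
def Rfl (z : ℝ × ℝ) : ℤ × ℤ := (⌊z.1⌋, ⌊z.2⌋)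

/-- The rescaled round-off `R_λ(w) = λ·R(w/λ)`. -/
def Rlam (lam : ℝ) (w : ℝ × ℝ) : ℝ × ℝ :=
  (lam * (⌊w.1 / lam⌋ : ℝ), lam * (⌊w.2 / lam⌋ : ℝ))

/-- The return domain `X`. -/
def Xdom (lam : ℝ) : Set (ℝ × ℝ) :=
  {z | IsLatticePt lam z ∧ 0 ≤ z.1 ∧ 0 ≤ z.2 ∧
    dG z ≤ dG ((Fl lam)^[4] z) ∧ dG z < dG ((Flinv lam)^[4] z)}

/-- Forward transit time `τ` to `X`. -/
def tau (lam : ℝ) (z : ℝ × ℝ) : ℕ := sInf {k : ℕ | 1 ≤ k ∧ (Fl lam)^[k] z ∈ Xdom lam}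

/-- Backward transit time `τ₋` to `X`. -/
def tauMinus (lam : ℝ) (z : ℝ × ℝ) : ℕ := sInf {k : ℕ | (Flinv lam)^[k] z ∈ Xdom lam}

/-- The return orbit `O_τ(z)`. -/
def returnOrbit (lam : ℝ) (z : ℝ × ℝ) : Set (ℝ × ℝ) :=
  {w | ∃ k : ℤ, -(tauMinus lam z : ℤ) ≤ k ∧ k ≤ (tau lam z : ℤ) ∧ w = FlIter lam k z}

/-- The first-return map `Φ`. -/
def Phi (lam : ℝ) (z : ℝ × ℝ) : ℝ × ℝ := (Fl lam)^[tau lam z] z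

/-- The full orbit `O(z) = {F_λ^t(z) : t ∈ ℤ}`. -/
def fullOrbit (lam : ℝ) (z : ℝ × ℝ) : Set (ℝ × ℝ) := {w | ∃ t : ℤ, w = FlIter lam t z}

/-- The set `Λ` of transition points. -/
def TransSet (lam : ℝ) : Set (ℝ × ℝ) :=
  {z | IsLatticePt lam z ∧ Rfl ((Fl lam)^[4] z) ≠ Rfl z}

/-- The set `Σ = ⋃ Σ_{m,n}`. -/
def SigmaSet (lam : ℝ) : Set (ℝ × ℝ) :=
  {z | z ∈ TransSet lam ∧ ∃ m n : ℤ,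
    max |z.1 - (m : ℝ)| |z.2 - (n : ℝ)| ≤
      lam * (max |2 * (m : ℝ) + 1| |2 * (n : ℝ) + 1| + 2)}

/-- `ℰ`: the natural numbers which are sums of two integer squares. -/
def Eset : Set ℕ := {n | ∃ a b : ℤ, (n : ℤ) = a ^ 2 + b ^ 2}

/-- The successor of `e` in `ℰ`. -/
def nextE (e : ℕ) : ℕ := sInf {f | f ∈ Eset ∧ e < f}

/-- The critical interval `I^e = (e, e′)`. -/
def Icrit (e : ℕ) : Set ℝ := Set.Ioo (e : ℝ) (nextE e : ℝ)

/-- The set `X^e`. -/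
def Xe (lam : ℝ) (e : ℕ) : Set (ℝ × ℝ) :=
  {z | z ∈ Xdom lam ∧ ∀ w ∈ returnOrbit lam z, Ham w ∈ Icrit e}

/-- A point of `X^e` is regular if it is not a transition point and its return
orbit avoids `Σ`. -/
def IsRegularPt (lam : ℝ) (e : ℕ) (z : ℝ × ℝ) : Prop :=
  z ∈ Xe lam e ∧ z ∉ TransSet lam ∧ returnOrbit lam z ∩ SigmaSet lam = ∅

/-- `J` is a maximal subinterval `Ĩ^e(λ)` of `I^e` on which all points of `X^e`
are regular. -/
def IsMaxRegInterval (lam : ℝ) (e : ℕ) (J : Set ℝ) : Prop :=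
  J ⊆ Icrit e ∧ J.OrdConnected ∧
    (∀ z ∈ Xe lam e, Ham z ∈ J → IsRegularPt lam e z) ∧
    ∀ J' : Set ℝ, J ⊆ J' → J' ⊆ Icrit e → J'.OrdConnected →
      (∀ z ∈ Xe lam e, Ham z ∈ J' → IsRegularPt lam e z) → J' = J

/-- The regular domain `X̃^e` determined by the interval `J = Ĩ^e(λ)`. -/
def Xtilde (lam : ℝ) (e : ℕ) (J : Set ℝ) : Set (ℝ × ℝ) :=
  {z | z ∈ Xe lam e ∧ Ham z ∈ J}

/-- The type of a vertex: the floor of the absolute value of its non-integer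
coordinate. -/
def vtype (z : ℝ × ℝ) : ℕ :=
  if ∃ m : ℤ, z.1 = (m : ℝ) then (⌊|z.2|⌋).toNat else (⌊|z.1|⌋).toNat

/-- `v` (1-indexed, entries `v 1, …, v k` with `k = ⌊√e⌋+1`) is the vertex list
of the polygon class of `e`, and `o j` records whether the `j`-th vertex lies on
a horizontal lattice line (i.e. has integer `y`-coordinate): for every value
`a ∈ I^e`, the vertices of the level polygon `{𝒫 = a}` lying in the first octant,
enumerated clockwise (i.e. by increasing `x`-coordinate), have types
`v 1, …, v k`. -/
def IsVertexList (e : ℕ) (v : ℕ → ℕ) (o : ℕ → Bool) : Prop :=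
  ∀ a ∈ Icrit e, ∃ p : ℕ → ℝ × ℝ,
    (∀ j, 1 ≤ j → j ≤ Nat.sqrt e + 1 →
      Ham (p j) = a ∧ p j ∈ DeltaSet ∧ 0 ≤ (p j).2 ∧ (p j).2 ≤ (p j).1 ∧
        vtype (p j) = v j ∧ (o j = true ↔ ∃ n : ℤ, (p j).2 = (n : ℝ))) ∧
    (∀ i j, 1 ≤ i → i < j → j ≤ Nat.sqrt e + 1 → (p i).1 < (p j).1) ∧
    (∀ w : ℝ × ℝ, Ham w = a → w ∈ DeltaSet → 0 ≤ w.2 → w.2 ≤ w.1 →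
      ∃ j, 1 ≤ j ∧ j ≤ Nat.sqrt e + 1 ∧ w = p j)

/-- The extended vertex list: `v_j = v_{2k−j}` for `k < j ≤ 2k−1`. -/
def vext (e : ℕ) (v : ℕ → ℕ) (j : ℕ) : ℕ :=
  if j ≤ Nat.sqrt e + 1 then v j else v (2 * (Nat.sqrt e + 1) - j)

/-- The extended orientation list. -/
def oext (e : ℕ) (o : ℕ → Bool) (j : ℕ) : Bool :=
  if j ≤ Nat.sqrt e + 1 then o j else o (2 * (Nat.sqrt e + 1) - j)

/-- The recursively defined integers `q_j` (here `v` is the extended vertex list):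
`q₁ = (2v₁+1)²`, `q_j = q_{j−1}` if `v_j = v_{j−1}`, and
`q_j = lcm((2v_j+1)(2v_{j−1}+1), q_{j−1})` otherwise. -/
def qseq (v : ℕ → ℕ) : ℕ → ℕ
  | 0 => (2 * v 1 + 1) ^ 2
  | 1 => (2 * v 1 + 1) ^ 2
  | j + 2 =>
    if v (j + 2) = v (j + 1) then qseq v (j + 1)
    else Nat.lcm ((2 * v (j + 2) + 1) * (2 * v (j + 1) + 1)) (qseq v (j + 1))

/-- `p_j = q_j/(2v_j+1)`. -/
def pseq (v : ℕ → ℕ) (j : ℕ) : ℕ := qseq v j / (2 * v j + 1)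

/-- `q = q_{2k−1}`. -/
def qval (e : ℕ) (v : ℕ → ℕ) : ℕ := qseq (vext e v) (2 * (Nat.sqrt e + 1) - 1)

/-- The vector `L_j = (λ q_j/(2v₁+1))·(1,1)`. -/
def Lvec (lam : ℝ) (v1 : ℕ) (qj : ℕ) : ℝ × ℝ :=
  (lam * (qj : ℝ) / (2 * (v1 : ℝ) + 1), lam * (qj : ℝ) / (2 * (v1 : ℝ) + 1))

/-- The lattice `𝕃 = ℤ·L_j + ℤ·((L_j − 𝐰_{v₁,v₁})/2)` as an additive subgroup
of `ℝ²`. -/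
def latticeL (lam : ℝ) (v1 : ℕ) (qj : ℕ) : AddSubgroup (ℝ × ℝ) :=
  AddSubgroup.closure
    {Lvec lam v1 qj, (2⁻¹ : ℝ) • (Lvec lam v1 qj - wmn lam (v1 : ℤ) (v1 : ℤ))}

/-- Forward transit time of `F_λ⁴` to `Λ`. -/
def tTrans (lam : ℝ) (z : ℝ × ℝ) : ℕ :=
  sInf {i : ℕ | 1 ≤ i ∧ (Fl lam)^[4 * i] z ∈ TransSet lam}

/-- The strip map `Ψ(z) = F_λ^{4t(z)}(z)`. -/
def Psi (lam : ℝ) (z : ℝ × ℝ) : ℝ × ℝ := (Fl lam)^[4 * tTrans lam z] z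

/-- Backward transit time of `F_λ⁻⁴` to `Λ`. -/
def sTrans (lam : ℝ) (z : ℝ × ℝ) : ℕ :=
  sInf {i : ℕ | 1 ≤ i ∧ (Flinv lam)^[4 * i] z ∈ TransSet lam}

/-- The inverse strip map `Ψ⁻¹`. -/
def PsiInv (lam : ℝ) (z : ℝ × ℝ) : ℝ × ℝ := (Flinv lam)^[4 * sTrans lam z] z

/-- `Ψ^j` for `j ∈ {−1} ∪ ℕ`. -/
def PsiPow (lam : ℝ) (j : ℤ) (z : ℝ × ℝ) : ℝ × ℝ :=
  if j < 0 then PsiInv lam z else (Psi lam)^[j.toNat] z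

/-- The coordinate unit vector in the non-integer direction of a vertex lying
on a horizontal (`horiz = true`) resp. vertical lattice line. -/
def evec (horiz : Bool) : ℝ × ℝ := if horiz then (1, 0) else (0, 1)

/-- `s ∈ {0, …, 2v_j}` is the code entry at a vertex point `w` of type `vj`: if
the vertex lies on a horizontal line `y = n` then, writing
`w = λ(⌈v_j/λ⌉ + x_j, ⌈n/λ⌉ + y_j)` with `|y_j| < 2v_j+1`, `s ≡ y_j (mod 2v_j+1)`;
analogously in the vertical case. -/
def CodeAt (lam : ℝ) (vj : ℕ) (horiz : Bool) (w : ℝ × ℝ) (s : ℤ) : Prop :=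
  0 ≤ s ∧ s < 2 * (vj : ℤ) + 1 ∧
    (if horiz then
        ∃ n Y yj : ℤ, w.2 = lam * (Y : ℝ) ∧ Y = ⌈(n : ℝ) / lam⌉ + yj ∧
          |yj| < 2 * (vj : ℤ) + 1 ∧ s ≡ yj [ZMOD (2 * (vj : ℤ) + 1)]
      else
        ∃ m X xj : ℤ, w.1 = lam * (X : ℝ) ∧ X = ⌈(m : ℝ) / lam⌉ + xj ∧
          |xj| < 2 * (vj : ℤ) + 1 ∧ s ≡ xj [ZMOD (2 * (vj : ℤ) + 1)])

/-- `σ` is the orbit code `(σ₋₁, σ₁, …, σ_{2k−1})` of `z`. -/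
def IsOrbitCode (lam : ℝ) (e : ℕ) (v : ℕ → ℕ) (o : ℕ → Bool) (z : ℝ × ℝ)
    (σ : ℤ → ℤ) : Prop :=
  CodeAt lam (v 1) (!(o 1)) (PsiInv lam z) (σ (-1)) ∧
    ∀ j : ℕ, 1 ≤ j → j ≤ 2 * (Nat.sqrt e + 1) - 1 →
      CodeAt lam (vext e v j) (oext e o j) ((Psi lam)^[j] z) (σ (j : ℤ))

/-- The Euclidean norm on `ℝ²`. -/
def enorm2 (z : ℝ × ℝ) : ℝ := Real.sqrt (z.1 ^ 2 + z.2 ^ 2)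

/-- The rotation number `ν(λ) = arccos(λ/2)/(2π)`. -/
def nuRot (lam : ℝ) : ℝ := Real.arccos (lam / 2) / (2 * Real.pi)

/-- Distance from a real number to the nearest integer. -/
def distInt (x : ℝ) : ℝ := |x - (round x : ℝ)|

/-- The first-order recurrence time `t*(λ)`. -/
def tstar (lam : ℝ) : ℕ :=
  sInf {k : ℕ | 1 ≤ k ∧ distInt ((k : ℝ) * nuRot lam) < distInt (4 * nuRot lam)}

/-- The square `A(r,λ)` of lattice points. -/
def Aset (r lam : ℝ) : Set (ℝ × ℝ) := {z | IsLatticePt lam z ∧ max |z.1| |z.2| < r}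

end
lemma support_lem (n : ℤ) (x : ℝ) :
    (2 * (n : ℝ) + 1) * x - n * (n + 1) ≤ Pfun x := by
  have h1 : ((⌊x⌋ : ℝ)) ≤ x := Int.floor_le x
  have h2 : x < (⌊x⌋ : ℝ) + 1 := Int.lt_floor_add_one x
  unfold Pfun
  rcases lt_trichotomy n ⌊x⌋ with h | h | h
  · have h3 : (n : ℝ) + 1 ≤ (⌊x⌋ : ℝ) := by exact_mod_cast h
    nlinarith [mul_nonneg (by linarith : (0:ℝ) ≤ (⌊x⌋ : ℝ) - n)
      (by linarith : (0:ℝ) ≤ 2 * x - (⌊x⌋ : ℝ) - n - 1)]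
  · subst h; nlinarith
  · have h3 : ((⌊x⌋ : ℝ)) + 1 ≤ n := by exact_mod_cast h
    nlinarith [mul_nonneg (by linarith : (0:ℝ) ≤ (n : ℝ) - ⌊x⌋)
      (by linarith : (0:ℝ) ≤ (n : ℝ) + ⌊x⌋ + 1 - 2 * x)]

lemma Pfun_eq (x : ℝ) : Pfun x = (2 * (⌊x⌋ : ℝ) + 1) * x - (⌊x⌋ : ℝ) * ((⌊x⌋ : ℝ) + 1) := by
  unfold Pfun; ring

lemma Pfun_combo {x y a b : ℝ} (ha : 0 ≤ a) (hb : 0 ≤ b) (hab : a + b = 1) :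
    Pfun (a * x + b * y) ≤ a * Pfun x + b * Pfun y := by
  set N := ⌊a * x + b * y⌋ with hN
  have key : Pfun (a * x + b * y)
      = a * ((2 * (N:ℝ) + 1) * x - N * (N + 1)) + b * ((2 * (N:ℝ) + 1) * y - N * (N + 1)) := by
    rw [Pfun_eq]
    have hb' : b = 1 - a := by linarith
    rw [← hN, hb']; ring
  rw [key]
  exact add_le_add (mul_le_mul_of_nonneg_left (support_lem N x) ha)
    (mul_le_mul_of_nonneg_left (support_lem N y) hb)

lemma Pfun_convex : ConvexOn ℝ Set.univ Pfun := by
  refine ⟨convex_univ, ?_⟩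
  intro x _ y _ a b ha hb hab
  simpa using Pfun_combo ha hb hab

lemma Pfun_fract (x : ℝ) : Pfun x = x ^ 2 + Int.fract x * (1 - Int.fract x) := by
  have h : (⌊x⌋ : ℝ) = x - Int.fract x := by rw [Int.fract]; ring
  rw [Pfun, h]; ring

lemma Pfun_neg (y : ℝ) : Pfun (-y) = Pfun y := by
  rw [Pfun_fract, Pfun_fract]
  by_cases h : Int.fract y = 0
  · rw [Int.fract_neg_eq_zero.mpr h, h]; ring
  · rw [Int.fract_neg h]; ring

lemma sq_le_Pfun (x : ℝ) : x ^ 2 ≤ Pfun x := by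
  rw [Pfun_fract]
  nlinarith [Int.fract_nonneg x, Int.fract_lt_one x]

lemma Pfun_zero : Pfun 0 = 0 := by
  simp [Pfun]

lemma Ham_convex : ConvexOn ℝ Set.univ Ham := by
  refine ⟨convex_univ, ?_⟩
  rintro ⟨x1, x2⟩ _ ⟨y1, y2⟩ _ a b ha hb hab
  have h1 := Pfun_combo (x := x1) (y := y1) ha hb hab
  have h2 := Pfun_combo (x := x2) (y := y2) ha hb hab
  simp only [Ham, Prod.smul_mk, Prod.mk_add_mk, smul_eq_mul]
  exact le_trans (add_le_add h1 h2) (by ring_nf; exact le_refl _)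

lemma Ham_continuous : Continuous Ham := by
  rw [← continuousOn_univ]
  exact Ham_convex.continuousOn isOpen_univ


/-- Convexity and symmetry of the Hamiltonian `𝒫`, and structure of its
sublevel sets. -/
theorem Ham_convex_symmetric_sublevels :
    ConvexOn ℝ Set.univ Pfun ∧ ConvexOn ℝ Set.univ Ham ∧
    (∀ x y : ℝ, Ham (y, x) = Ham (x, y)) ∧
    (∀ x y : ℝ, Ham (x, -y) = Ham (x, y)) ∧
    ∀ c : ℝ, 0 < c →
      IsCompact {z : ℝ × ℝ | Ham z ≤ c} ∧
      Convex ℝ {z : ℝ × ℝ | Ham z ≤ c} ∧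
      (interior {z : ℝ × ℝ | Ham z ≤ c}).Nonempty ∧
      frontier {z : ℝ × ℝ | Ham z ≤ c} = {z : ℝ × ℝ | Ham z = c} := by
  refine ⟨Pfun_convex, Ham_convex, fun x y => by simp [Ham, add_comm], fun x y => by
    simp [Ham, Pfun_neg], fun c hc => ?_⟩
  have hHam0 : Ham 0 = 0 := by simp [Ham, Pfun_zero]
  have hclosed : IsClosed {z : ℝ × ℝ | Ham z ≤ c} :=
    isClosed_le Ham_continuous continuous_const
  -- boundedness
  have hsub : {z : ℝ × ℝ | Ham z ≤ c} ⊆ Metric.closedBall 0 (Real.sqrt (2 * c)) := by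
    intro z hz
    simp only [Set.mem_setOf_eq] at hz
    have h1 := sq_le_Pfun z.1
    have h2 := sq_le_Pfun z.2
    have hz1 : z.1 ^ 2 ≤ c := by
      have := sq_nonneg z.2; simp [Ham] at hz; nlinarith
    have hz2 : z.2 ^ 2 ≤ c := by
      have := sq_nonneg z.1; simp [Ham] at hz; nlinarith
    simp only [Metric.mem_closedBall, Prod.dist_eq, dist_zero_right]
    have hs : (0:ℝ) ≤ Real.sqrt (2 * c) := Real.sqrt_nonneg _
    have habs : ∀ w : ℝ, w ^ 2 ≤ c → ‖w‖ ≤ Real.sqrt (2 * c) := by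
      intro w hw
      rw [Real.norm_eq_abs, ← Real.sqrt_sq_eq_abs]
      exact Real.sqrt_le_sqrt (by linarith)
    exact max_le (habs z.1 hz1) (habs z.2 hz2)
  have hcompact : IsCompact {z : ℝ × ℝ | Ham z ≤ c} :=
    (Metric.isCompact_of_isClosed_isBounded hclosed
      ((Metric.isBounded_closedBall).subset hsub))
  have hconvex : Convex ℝ {z : ℝ × ℝ | Ham z ≤ c} := by
    have := Ham_convex.convex_le c
    simpa using this
  -- interior: {Ham < c} is open and contains 0
  have hopen : IsOpen {z : ℝ × ℝ | Ham z < c} := isOpen_lt Ham_continuous continuous_const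
  have hmem0 : (0:ℝ×ℝ) ∈ {z : ℝ × ℝ | Ham z < c} := by simpa [hHam0] using hc
  have hlt_sub : {z : ℝ × ℝ | Ham z < c} ⊆ interior {z : ℝ × ℝ | Ham z ≤ c} :=
    hopen.subset_interior_iff.mpr (fun z hz => show Ham z ≤ c from le_of_lt hz)
  have hint : interior {z : ℝ × ℝ | Ham z ≤ c} = {z : ℝ × ℝ | Ham z < c} := by
    refine Set.Subset.antisymm ?_ hlt_sub
    intro z hz
    by_contra hnot
    simp only [Set.mem_setOf_eq, not_lt] at hnot
    have hzc : Ham z = c := le_antisymm (interior_subset (s := {z : ℝ × ℝ | Ham z ≤ c}) hz) hnot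
    -- points (1+t)z converge to z, but Ham((1+t)z) > c
    have hlim : Filter.Tendsto (fun n : ℕ => (1 + 1/(n+1 : ℝ)) • z) Filter.atTop (nhds z) := by
      have : Filter.Tendsto (fun n : ℕ => (1 + 1/(n+1 : ℝ))) Filter.atTop (nhds 1) := by
        have := tendsto_one_div_add_atTop_nhds_zero_nat (𝕜 := ℝ)
        simpa using (tendsto_const_nhds.add this)
      simpa using (this.smul (tendsto_const_nhds (x := z)))
    have hev : ∀ᶠ n : ℕ in Filter.atTop, (1 + 1/(n+1 : ℝ)) • z ∈ {z : ℝ × ℝ | Ham z ≤ c} := by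
      filter_upwards [hlim.eventually (isOpen_interior.mem_nhds hz)] with n hn
      exact interior_subset (s := {z : ℝ × ℝ | Ham z ≤ c}) hn
    obtain ⟨n, hn⟩ := hev.exists
    -- but convexity forces Ham ((1+t) z) ≥ (1+t) c > c
    set t : ℝ := 1/(n+1 : ℝ) with ht
    have ht0 : 0 < t := by positivity
    have key : Ham z ≤ (1/(1+t)) * Ham ((1+t) • z) + (t/(1+t)) * Ham 0 := by
      have h1 : (0:ℝ) ≤ 1/(1+t) := by positivity
      have h2 : (0:ℝ) ≤ t/(1+t) := by positivity
      have h3 : 1/(1+t) + t/(1+t) = 1 := by field_simp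
      have := Ham_convex.2 (Set.mem_univ ((1+t) • z)) (Set.mem_univ (0:ℝ×ℝ)) h1 h2 h3
      simp only [smul_zero, add_zero, smul_smul] at this
      have hz' : (1/(1+t)) * (1+t) = 1 := by field_simp
      rw [hz'] at this
      simpa [smul_eq_mul] using this
    rw [hHam0, hzc, mul_zero, add_zero] at key
    have hle : Ham ((1+t) • z) ≤ c := hn
    have h1t : (0:ℝ) < 1 + t := by positivity
    have : c ≤ (1/(1+t)) * c := le_trans key (by
      have := mul_le_mul_of_nonneg_left hle (by positivity : (0:ℝ) ≤ 1/(1+t))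
      linarith)
    rw [one_div, inv_mul_eq_div] at this
    have h2 := (le_div_iff₀ h1t).mp this
    nlinarith
  refine ⟨hcompact, hconvex, ⟨0, hlt_sub hmem0⟩, ?_⟩
  rw [frontier, hclosed.closure_eq, hint]
  ext z
  simp only [Set.mem_diff, Set.mem_setOf_eq, not_lt]
  constructor
  · rintro ⟨h1, h2⟩; exact le_antisymm h1 h2
  · intro h; exact ⟨le_of_eq h, ge_of_eq h⟩
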